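/- For any two positive semi-definite matrices A, B in R^{k×k}, the operator norm of A^{1/2} - B^{1/2} is at most ||A - B|| divided by the sum of the smallest eigenvalues of A^{1/2} and B^{1/2} (assuming this sum is positive). -/

import Mathlib

open Matrix

namespace Matrix.PosSemidef

open scoped ComplexOrder

variable {n 𝕜 : Type*} [Fintype n] [RCLike 𝕜] [DecidableEq n] {A : Matrix n n 𝕜}

/-- The positive semidefinite square root of a positive semidefinite matrix -/
noncomputable def sqrt (hA : A.PosSemidef) : Matrix n n 𝕜 :=
  hA.1.eigenvectorUnitary.1 * diagonal ((↑) ∘ (√·) ∘ hA.1.eigenvalues) *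
  (star hA.1.eigenvectorUnitary : Matrix n n 𝕜)

lemma posSemidef_sqrt (hA : A.PosSemidef) : PosSemidef hA.sqrt := by
  apply PosSemidef.mul_mul_conjTranspose_same
  refine posSemidef_diagonal_iff.mpr fun i ↦ ?_
  rw [Function.comp_apply, RCLike.nonneg_iff]
  constructor
  · simp only [RCLike.ofReal_re]
    exact Real.sqrt_nonneg _
  · simp only [RCLike.ofReal_im]

end Matrix.PosSemidef

/-- Operator (spectral) norm of a real matrix, viewed as a linear map between
Euclidean spaces. -/
noncomputable def opNorm {m n : Type*} [Fintype m] [Fintype n] [DecidableEq n]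
    (M : Matrix m n ℝ) : ℝ :=
  ‖LinearMap.toContinuousLinearMap (Matrix.toEuclideanLin M)‖

/-- Smallest eigenvalue of a Hermitian (symmetric) real matrix. -/
noncomputable def minEig {k : ℕ} (A : Matrix (Fin k) (Fin k) ℝ) (hA : A.IsHermitian) : ℝ :=
  ⨅ i, hA.eigenvalues i

section Aux

open scoped InnerProductSpace

variable {k : ℕ} {M : Matrix (Fin k) (Fin k) ℝ}

lemma aux_apply_eigen (hM : M.IsHermitian) (i : Fin k) :
    Matrix.toEuclideanLin M (hM.eigenvectorBasis i) = hM.eigenvalues i • hM.eigenvectorBasis i := by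
  have h := hM.mulVec_eigenvectorBasis i
  ext j
  simpa [Matrix.toEuclideanLin_apply] using congrFun h j

lemma aux_repr_toEuclideanLin (hM : M.IsHermitian) (x : EuclideanSpace ℝ (Fin k)) (i : Fin k) :
    hM.eigenvectorBasis.repr (Matrix.toEuclideanLin M x) i
      = hM.eigenvalues i * hM.eigenvectorBasis.repr x i := by
  rw [hM.eigenvectorBasis.repr_apply_apply, hM.eigenvectorBasis.repr_apply_apply,
    ← (Matrix.isHermitian_iff_isSymmetric.1 hM) (hM.eigenvectorBasis i) x,
    aux_apply_eigen hM i, real_inner_smul_left]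

lemma aux_inner_expand (hM : M.IsHermitian) (x : EuclideanSpace ℝ (Fin k)) :
    ⟪Matrix.toEuclideanLin M x, x⟫_ℝ
      = ∑ i, hM.eigenvalues i * (hM.eigenvectorBasis.repr x i)^2 := by
  rw [← hM.eigenvectorBasis.repr.inner_map_map (Matrix.toEuclideanLin M x) x]
  simp only [PiLp.inner_apply, RCLike.inner_apply, conj_trivial]
  refine Finset.sum_congr rfl fun i _ => ?_
  rw [aux_repr_toEuclideanLin hM, sq]; ring

lemma aux_norm_sq_expand (x : EuclideanSpace ℝ (Fin k)) :
    ‖x‖^2 = ∑ i, (x i)^2 := by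
  rw [EuclideanSpace.norm_eq, Real.sq_sqrt (by positivity)]
  simp [sq_abs]

lemma aux_quad_lower (hM : M.IsHermitian) (m : ℝ) (hm : ∀ i, m ≤ hM.eigenvalues i)
    (x : EuclideanSpace ℝ (Fin k)) :
    m * ‖x‖^2 ≤ ⟪Matrix.toEuclideanLin M x, x⟫_ℝ := by
  rw [aux_inner_expand hM, ← hM.eigenvectorBasis.repr.norm_map x, aux_norm_sq_expand,
    Finset.mul_sum]
  exact Finset.sum_le_sum fun i _ => mul_le_mul_of_nonneg_right (hm i) (sq_nonneg _)

lemma aux_opNorm_le_of_eig (hM : M.IsHermitian) (c : ℝ) (hc : 0 ≤ c)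
    (h : ∀ i, |hM.eigenvalues i| ≤ c) :
    ‖LinearMap.toContinuousLinearMap (Matrix.toEuclideanLin M)‖ ≤ c := by
  apply ContinuousLinearMap.opNorm_le_bound _ hc
  intro x
  have h2 : ‖Matrix.toEuclideanLin M x‖^2 ≤ (c * ‖x‖)^2 := by
    rw [← hM.eigenvectorBasis.repr.norm_map (Matrix.toEuclideanLin M x), aux_norm_sq_expand,
      mul_pow, ← hM.eigenvectorBasis.repr.norm_map x, aux_norm_sq_expand, Finset.mul_sum]
    apply Finset.sum_le_sum
    intro i _
    rw [aux_repr_toEuclideanLin hM, mul_pow]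
    apply mul_le_mul_of_nonneg_right _ (sq_nonneg _)
    calc hM.eigenvalues i ^ 2 = |hM.eigenvalues i|^2 := (sq_abs _).symm
    _ ≤ c^2 := by apply pow_le_pow_left₀ (abs_nonneg _) (h i)
  have hx : ‖Matrix.toEuclideanLin M x‖ ≤ c * ‖x‖ := by
    have h3 := Real.sqrt_le_sqrt h2
    rwa [Real.sqrt_sq (norm_nonneg _), Real.sqrt_sq (by positivity)] at h3
  simpa using hx

lemma aux_toEuclideanLin_mul (M N : Matrix (Fin k) (Fin k) ℝ) :
    Matrix.toEuclideanLin (M * N)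
      = (Matrix.toEuclideanLin M).comp (Matrix.toEuclideanLin N) := by
  simp only [Matrix.toEuclideanLin_eq_toLin]
  exact Matrix.toLin_mul _ _ _ M N

lemma aux_sqrt_mul_self {A : Matrix (Fin k) (Fin k) ℝ} (hA : A.PosSemidef) :
    hA.sqrt * hA.sqrt = A := by
  conv_rhs => rw [hA.1.spectral_theorem, Unitary.conjStarAlgAut_apply]
  unfold Matrix.PosSemidef.sqrt
  have hU : (star hA.1.eigenvectorUnitary : Matrix (Fin k) (Fin k) ℝ) *
      (hA.1.eigenvectorUnitary : Matrix (Fin k) (Fin k) ℝ) = 1 := by simp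
  have hd : diagonal (((RCLike.ofReal : ℝ → ℝ) ∘ (√·) ∘ hA.1.eigenvalues : Fin k → ℝ)) *
      diagonal (((RCLike.ofReal : ℝ → ℝ) ∘ (√·) ∘ hA.1.eigenvalues : Fin k → ℝ))
      = diagonal (RCLike.ofReal ∘ hA.1.eigenvalues) := by
    rw [diagonal_mul_diagonal]
    congr 1
    ext i
    simp [Real.mul_self_sqrt (hA.eigenvalues_nonneg i)]
  rw [← hd]
  simp only [mul_assoc]
  rw [← mul_assoc (star hA.1.eigenvectorUnitary : Matrix (Fin k) (Fin k) ℝ), hU, one_mul]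

end Aux

open scoped InnerProductSpace in
/-- For PSD matrices `A, B`, `‖√A - √B‖ ≤ ‖A - B‖ / (μ_min(√A) + μ_min(√B))`
provided the denominator is positive. -/
theorem sqrt_diff_opNorm_le {k : ℕ} (A B : Matrix (Fin k) (Fin k) ℝ)
    (hA : A.PosSemidef) (hB : B.PosSemidef)
    (hpos : 0 < minEig hA.sqrt hA.posSemidef_sqrt.1 + minEig hB.sqrt hB.posSemidef_sqrt.1) :
    opNorm (hA.sqrt - hB.sqrt) ≤
      opNorm (A - B) / (minEig hA.sqrt hA.posSemidef_sqrt.1 + minEig hB.sqrt hB.posSemidef_sqrt.1) := by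
  have hS : (hA.sqrt).IsHermitian := hA.posSemidef_sqrt.1
  have hT : (hB.sqrt).IsHermitian := hB.posSemidef_sqrt.1
  set S := hA.sqrt
  set T := hB.sqrt
  set μ := minEig hA.sqrt hA.posSemidef_sqrt.1 + minEig hB.sqrt hB.posSemidef_sqrt.1 with hμ
  have hD : (S - T).IsHermitian := hS.sub hT
  have hc : (0:ℝ) ≤ opNorm (A - B) / μ := div_nonneg (norm_nonneg _) hpos.le
  refine aux_opNorm_le_of_eig hD _ hc fun i => ?_
  set v := hD.eigenvectorBasis i with hv
  have hv1 : ‖v‖ = 1 := hD.eigenvectorBasis.orthonormal.1 i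
  set lam := hD.eigenvalues i with hlam
  -- quadratic form lower bounds
  have hqS : minEig S hS ≤ ⟪Matrix.toEuclideanLin S v, v⟫_ℝ := by
    have := aux_quad_lower hS (minEig S hS)
      (fun j => ciInf_le (Finite.bddBelow_range _) j) v
    simpa [hv1] using this
  have hqT : minEig T hT ≤ ⟪Matrix.toEuclideanLin T v, v⟫_ℝ := by
    have := aux_quad_lower hT (minEig T hT)
      (fun j => ciInf_le (Finite.bddBelow_range _) j) v
    simpa [hv1] using this
  have hsum : μ ≤ ⟪Matrix.toEuclideanLin S v, v⟫_ℝ + ⟪Matrix.toEuclideanLin T v, v⟫_ℝ :=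
    add_le_add hqS hqT
  have hsum0 : (0:ℝ) < ⟪Matrix.toEuclideanLin S v, v⟫_ℝ + ⟪Matrix.toEuclideanLin T v, v⟫_ℝ :=
    lt_of_lt_of_le hpos hsum
  -- the key algebraic identity
  have hAB : A - B = S * (S - T) + (S - T) * T := by
    rw [mul_sub, sub_mul, aux_sqrt_mul_self hA, aux_sqrt_mul_self hB]
    abel
  have hev : Matrix.toEuclideanLin (S - T) v = lam • v := aux_apply_eigen hD i
  have hquad : ⟪Matrix.toEuclideanLin (A - B) v, v⟫_ℝ
      = lam * (⟪Matrix.toEuclideanLin S v, v⟫_ℝ + ⟪Matrix.toEuclideanLin T v, v⟫_ℝ) := by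
    rw [hAB, map_add, LinearMap.add_apply, inner_add_left,
      aux_toEuclideanLin_mul, aux_toEuclideanLin_mul, LinearMap.comp_apply,
      LinearMap.comp_apply, hev, _root_.map_smul, real_inner_smul_left,
      (Matrix.isHermitian_iff_isSymmetric.1 hD) (Matrix.toEuclideanLin T v) v, hev,
      real_inner_smul_right]
    ring
  have hnormv : |⟪Matrix.toEuclideanLin (A - B) v, v⟫_ℝ| ≤ opNorm (A - B) := by
    have h1 : |⟪Matrix.toEuclideanLin (A - B) v, v⟫_ℝ|
        ≤ ‖Matrix.toEuclideanLin (A - B) v‖ * ‖v‖ := abs_real_inner_le_norm _ _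
    have h2 : ‖Matrix.toEuclideanLin (A - B) v‖ ≤ opNorm (A - B) * ‖v‖ := by
      simpa only [opNorm, LinearMap.coe_toContinuousLinearMap'] using
        (LinearMap.toContinuousLinearMap (Matrix.toEuclideanLin (A - B))).le_opNorm v
    calc |⟪Matrix.toEuclideanLin (A - B) v, v⟫_ℝ| ≤ ‖Matrix.toEuclideanLin (A - B) v‖ * ‖v‖ := h1
    _ ≤ opNorm (A - B) * ‖v‖ * ‖v‖ := mul_le_mul_of_nonneg_right h2 (norm_nonneg _)
    _ = opNorm (A - B) := by rw [hv1]; ring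
  have key : |lam| * μ ≤ opNorm (A - B) := by
    calc |lam| * μ
        ≤ |lam| * (⟪Matrix.toEuclideanLin S v, v⟫_ℝ + ⟪Matrix.toEuclideanLin T v, v⟫_ℝ) :=
          mul_le_mul_of_nonneg_left hsum (abs_nonneg _)
    _ = |⟪Matrix.toEuclideanLin (A - B) v, v⟫_ℝ| := by
          rw [hquad, abs_mul, abs_of_pos hsum0]
    _ ≤ opNorm (A - B) := hnormv
  exact (le_div_iff₀ hpos).2 key
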